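/- arXiv:1311.4404 — 2 statements merged into one kernel-verified Lean document; each statement's English description precedes it below -/
import Mathlib

section
/- If a, b, c, d, e are nonnegative real numbers with 1/(4+a) + 1/(4+b) + 1/(4+c) + 1/(4+d) + 1/(4+e) = 1, then a/(4+a²) + b/(4+b²) + c/(4+c²) + d/(4+d²) + e/(4+e²) ≤ 1. -/
lemma key (x : ℝ) (hx : 0 ≤ x) : x/(4+x^2) ≤ 4/5 - 3/(4+x) := by
  have h1 : (0:ℝ) < 4 + x := by linarith
  have h2 : (0:ℝ) < 4 + x^2 := by positivity
  rw [div_le_iff₀ h2, ← sub_nonneg]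
  have hkey : (4/5 - 3/(4+x) - x) = (4*(4+x) - 15 - 5*x*(4+x)) / (5*(4+x)) := by
    field_simp; ring
  have : (4/5 - 3/(4+x)) * (4+x^2) - x = (4*(x-1)^2*(x+1)) / (5*(4+x)) := by
    field_simp; ring
  rw [this]
  positivity

theorem stmt_8 (a b c d e : ℝ) (ha : 0 ≤ a) (hb : 0 ≤ b) (hc : 0 ≤ c) (hd : 0 ≤ d) (he : 0 ≤ e)
    (hsum : 1/(4+a) + 1/(4+b) + 1/(4+c) + 1/(4+d) + 1/(4+e) = 1) :
    a/(4+a^2) + b/(4+b^2) + c/(4+c^2) + d/(4+d^2) + e/(4+e^2) ≤ 1 := by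
  have := key a ha
  have := key b hb
  have := key c hc
  have := key d hd
  have := key e he
  have e1 : 3/(4+a) = 3*(1/(4+a)) := by ring
  have e2 : 3/(4+b) = 3*(1/(4+b)) := by ring
  have e3 : 3/(4+c) = 3*(1/(4+c)) := by ring
  have e4 : 3/(4+d) = 3*(1/(4+d)) := by ring
  have e5 : 3/(4+e) = 3*(1/(4+e)) := by ring
  linarith
end

section
/- Let α be a nonzero real number, x₀ a positive real number, and n ≥ 2 a natural number. Let f be a function defined on the positive reals and differentiable at x₀. Suppose (α − 1)·f'(x₀) ≥ 0 and for every positive real x with x < n·x₀ one has f(x) ≥ (f'(x₀)/(α·x₀^(α−1)))·(x^α − x₀^α) + f(x₀). Then for all positive reals x₁, …, xₙ with x₁ + ⋯ + xₙ = n·x₀, one has f(x₁) + ⋯ + f(xₙ) ≥ n·f(x₀). -/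
open Real

/-- Bernoulli for nonpositive exponents. -/
lemma bern_neg {s p : ℝ} (hs : -1 < s) (hp : p ≤ 0) : 1 + p * s ≤ (1 + s) ^ p := by
  have h1 : (0:ℝ) < 1 + s := by linarith
  have h2 : (-1:ℝ) ≤ -s / (1 + s) := by
    rw [le_div_iff₀ h1]; nlinarith
  have h3 : (1:ℝ) ≤ 1 - p := by linarith
  have h := one_add_mul_self_le_rpow_one_add h2 h3
  have e1 : 1 + -s / (1 + s) = (1 + s)⁻¹ := by field_simp; ring
  rw [e1, Real.inv_rpow h1.le] at h
  have h4 : (0:ℝ) < (1 + s) ^ (1 - p) := Real.rpow_pos_of_pos h1 _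
  have lhs_eq : 1 + (1 - p) * (-s / (1 + s)) = (1 + p * s) / (1 + s) := by
    field_simp; ring
  rw [lhs_eq, div_le_iff₀ h1] at h
  have e3 : (1 + s) ^ (1 - p) * (1 + s) ^ p = 1 + s := by
    rw [← Real.rpow_add h1]; norm_num
  calc 1 + p * s ≤ ((1 + s) ^ (1 - p))⁻¹ * (1 + s) := h
    _ = (1 + s) ^ p := by
        field_simp; linarith [e3]

/-- Tangent line below `t ^ p` for `p ≥ 1` or `p ≤ 0`. -/
lemma tangent_ge {x₀ t p : ℝ} (hx₀ : 0 < x₀) (ht : 0 < t) (hp : 1 ≤ p ∨ p ≤ 0) :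
    x₀ ^ p + p * x₀ ^ (p - 1) * (t - x₀) ≤ t ^ p := by
  have hs : (-1:ℝ) < t / x₀ - 1 := by
    have : 0 < t / x₀ := div_pos ht hx₀
    linarith
  have hbern : 1 + p * (t / x₀ - 1) ≤ (t / x₀) ^ p := by
    have e : (1:ℝ) + (t / x₀ - 1) = t / x₀ := by ring
    rcases hp with hp | hp
    · have := one_add_mul_self_le_rpow_one_add hs.le hp
      rwa [e] at this
    · have := bern_neg hs hp
      rwa [e] at this
  have hxp : (0:ℝ) < x₀ ^ p := Real.rpow_pos_of_pos hx₀ _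
  rw [Real.div_rpow ht.le hx₀.le] at hbern
  have h2 := mul_le_mul_of_nonneg_left hbern hxp.le
  have e2 : x₀ ^ p * (t ^ p / x₀ ^ p) = t ^ p := by field_simp
  have e3 : x₀ ^ p * (1 + p * (t / x₀ - 1)) = x₀ ^ p + p * (x₀ ^ p / x₀) * (t - x₀) := by
    field_simp
  have e4 : x₀ ^ (p - 1) = x₀ ^ p / x₀ := by
    rw [Real.rpow_sub hx₀, Real.rpow_one]
  rw [e2, e3] at h2
  rw [e4]
  linarith

/-- Tangent line above `t ^ p` for `0 ≤ p ≤ 1`. -/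
lemma tangent_le {x₀ t p : ℝ} (hx₀ : 0 < x₀) (ht : 0 < t) (hp0 : 0 ≤ p) (hp1 : p ≤ 1) :
    t ^ p ≤ x₀ ^ p + p * x₀ ^ (p - 1) * (t - x₀) := by
  have hs : (-1:ℝ) < t / x₀ - 1 := by
    have : 0 < t / x₀ := div_pos ht hx₀
    linarith
  have hbern : (t / x₀) ^ p ≤ 1 + p * (t / x₀ - 1) := by
    have e : (1:ℝ) + (t / x₀ - 1) = t / x₀ := by ring
    have := rpow_one_add_le_one_add_mul_self hs.le hp0 hp1
    rwa [e] at this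
  have hxp : (0:ℝ) < x₀ ^ p := Real.rpow_pos_of_pos hx₀ _
  rw [Real.div_rpow ht.le hx₀.le] at hbern
  have h2 := mul_le_mul_of_nonneg_left hbern hxp.le
  have e2 : x₀ ^ p * (t ^ p / x₀ ^ p) = t ^ p := by field_simp
  have e3 : x₀ ^ p * (1 + p * (t / x₀ - 1)) = x₀ ^ p + p * (x₀ ^ p / x₀) * (t - x₀) := by
    field_simp
  have e4 : x₀ ^ (p - 1) = x₀ ^ p / x₀ := by
    rw [Real.rpow_sub hx₀, Real.rpow_one]
  rw [e2, e3] at h2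
  rw [e4]
  linarith

lemma chord_key {α x₀ t f' : ℝ} (hα : α ≠ 0) (hx₀ : 0 < x₀) (ht : 0 < t)
    (hsign : 0 ≤ (α - 1) * f') :
    f' * (t - x₀) ≤ f' / (α * x₀ ^ (α - 1)) * (t ^ α - x₀ ^ α) := by
  have hxp : (0:ℝ) < x₀ ^ (α - 1) := Real.rpow_pos_of_pos hx₀ _
  rcases lt_trichotomy α 1 with h1 | h1 | h1
  · rcases lt_trichotomy α 0 with h0 | h0 | h0
    · -- α < 0 : convex, f' ≤ 0, denominator negative
      have hf' : f' ≤ 0 := by nlinarith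
      have hA : α * x₀ ^ (α - 1) < 0 := mul_neg_of_neg_of_pos h0 hxp
      have htan := tangent_ge hx₀ ht (Or.inr h0.le)
      rw [div_mul_eq_mul_div, le_div_iff_of_neg hA]
      nlinarith
    · exact absurd h0 hα
    · -- 0 < α < 1 : concave, f' ≤ 0, denominator positive
      have hf' : f' ≤ 0 := by nlinarith
      have hA : 0 < α * x₀ ^ (α - 1) := mul_pos h0 hxp
      have htan := tangent_le hx₀ ht h0.le h1.le
      rw [div_mul_eq_mul_div, le_div_iff₀ hA]
      nlinarith
  · -- α = 1 : equality
    subst h1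
    simp [Real.rpow_one]
  · -- 1 < α : convex, f' ≥ 0
    have hf' : 0 ≤ f' := by nlinarith
    have hA : 0 < α * x₀ ^ (α - 1) := mul_pos (by linarith) hxp
    have htan := tangent_ge hx₀ ht (Or.inl h1.le)
    rw [div_mul_eq_mul_div, le_div_iff₀ hA]
    nlinarith



theorem stmt_17 (α : ℝ) (hα : α ≠ 0) (x₀ : ℝ) (hx₀ : 0 < x₀) (n : ℕ) (hn : 2 ≤ n)
    (f : ℝ → ℝ) (f' : ℝ) (hf : HasDerivAt f f' x₀)
    (hsign : 0 ≤ (α - 1) * f')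
    (htangent : ∀ x : ℝ, 0 < x → x < n * x₀ →
      f x ≥ (f' / (α * x₀ ^ (α - 1))) * (x ^ α - x₀ ^ α) + f x₀)
    (x : Fin n → ℝ) (hx : ∀ j, 0 < x j)
    (hconstraint : ∑ j, x j = n * x₀) :
    ∑ j, f (x j) ≥ n * f x₀ := by
  have key : ∀ j, f' * (x j - x₀) + f x₀ ≤ f (x j) := by
    intro j
    obtain ⟨i, hij⟩ := Fintype.exists_ne_of_one_lt_card (by simp; omega) j
    have hlt : x j < n * x₀ := by
      have hmem : i ∈ Finset.univ.erase j := Finset.mem_erase.mpr ⟨hij, Finset.mem_univ i⟩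
      have h1 : x i ≤ ∑ k ∈ Finset.univ.erase j, x k :=
        Finset.single_le_sum (fun k _ => (hx k).le) hmem
      have h2 : x j + ∑ k ∈ Finset.univ.erase j, x k = ∑ k, x k :=
        Finset.add_sum_erase _ _ (Finset.mem_univ j)
      have := hx i
      rw [hconstraint] at h2
      linarith
    have htan := htangent (x j) (hx j) hlt
    have := chord_key hα hx₀ (hx j) hsign (t := x j) (f' := f')
    linarith
  have hsum : ∑ j, (f' * (x j - x₀) + f x₀) ≤ ∑ j, f (x j) :=
    Finset.sum_le_sum fun j _ => key j
  have hcalc : ∑ j, (f' * (x j - x₀) + f x₀) = (n : ℝ) * f x₀ := by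
    rw [Finset.sum_add_distrib, Finset.sum_const, ← Finset.mul_sum,
      Finset.sum_sub_distrib, Finset.sum_const, hconstraint]
    simp [Finset.card_univ]
  linarith [hsum, hcalc.symm ▸ hsum]
end
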